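/- Suppose A satisfies the ℓ1-isometry bounds m^{-1}||A(X)||_1 ≤ (1+δ)||X||_1 for X ⪰ 0 and m^{-1}||A(X)||_1 ≥ 0.94(1−δ)||X||_op for X ∈ T, with δ ≤ 1/9, and there exists Y = A^*(λ) with ||Y_T||_1 ≤ 1/2, Y_{T^⊥} ⪰ I_{T^⊥}, and ||λ||_1 ≤ 5. Then any X ⪰ 0 with ||A(X) − b||_2 ≤ ε (where b = A(X_0), X_0 = x_0 x_0^T, ||X_0||_2 = 1) satisfies ||X − X_0||_2 ≤ C ε for an absolute constant C > 0 (depending only on δ). -/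

import Mathlib

open Matrix

/-- Nuclear norm (sum of singular values) of a real square matrix. -/
noncomputable def nucNorm {n : ℕ} (M : Matrix (Fin n) (Fin n) ℝ) : ℝ :=
  ∑ i, Real.sqrt ((show (Mᵀ * M).IsHermitian by
    simpa using Matrix.isHermitian_conjTranspose_mul_self M).eigenvalues i)

/-- Spectral (operator) norm of a real square matrix. -/
noncomputable def opNorm {n : ℕ} (M : Matrix (Fin n) (Fin n) ℝ) : ℝ :=
  ‖LinearMap.toContinuousLinearMap (Matrix.toEuclideanLin M)‖

/-- Orthogonal projection onto `T^⊥`: `X ↦ (I − x₀x₀ᵀ) X (I − x₀x₀ᵀ)`. -/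
noncomputable def TperpProj {n : ℕ} (x0 : Fin n → ℝ) (X : Matrix (Fin n) (Fin n) ℝ) :
    Matrix (Fin n) (Fin n) ℝ :=
  (1 - vecMulVec x0 x0) * X * (1 - vecMulVec x0 x0)

/-- Orthogonal projection onto `T`. -/
noncomputable def TProj {n : ℕ} (x0 : Fin n → ℝ) (X : Matrix (Fin n) (Fin n) ℝ) :
    Matrix (Fin n) (Fin n) ℝ :=
  X - TperpProj x0 X


/-- Frobenius norm of a real square matrix. -/
noncomputable def frobNorm {n : ℕ} (M : Matrix (Fin n) (Fin n) ℝ) : ℝ :=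
  Real.sqrt (Matrix.trace (Mᵀ * M))

section Helpers

variable {n m : ℕ}

lemma trace_eq_sum_eig {A : Matrix (Fin n) (Fin n) ℝ} (hA : A.IsHermitian) :
    A.trace = ∑ i, hA.eigenvalues i := by
  conv_lhs => rw [hA.spectral_theorem, Unitary.conjStarAlgAut_apply, Matrix.trace_mul_cycle,
    Unitary.coe_star_mul_self, Matrix.one_mul]
  simp [Matrix.trace_diagonal]

open scoped MatrixOrder in
lemma nucNorm_psd_eq_trace {A : Matrix (Fin n) (Fin n) ℝ} (hA : A.PosSemidef) :
    nucNorm A = A.trace := by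
  have hB : (Aᵀ * A).PosSemidef := by simpa using Matrix.posSemidef_conjTranspose_mul_self A
  have hAt : Aᵀ = A := by
    have h := hA.1
    rwa [Matrix.IsHermitian, Matrix.conjTranspose_eq_transpose_of_trivial] at h
  have hAA : A * A = Aᵀ * A := by rw [hAt]
  have hAs : CFC.sqrt (Aᵀ * A) = A := by rw [← hAA]; exact CFC.sqrt_mul_self A hA.nonneg
  have ht : (CFC.sqrt (Aᵀ * A)).trace = ∑ i, Real.sqrt (hB.1.eigenvalues i) := by
    rw [CFC.sqrt_eq_real_sqrt _ hB.nonneg, cfcₙ_eq_cfc, Matrix.IsHermitian.cfc_eq hB.1,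
      Matrix.IsHermitian.cfc, Unitary.conjStarAlgAut_apply, Matrix.trace_mul_cycle,
      Unitary.coe_star_mul_self, Matrix.one_mul]
    simp [Matrix.trace_diagonal]
  rw [hAs] at ht
  rw [nucNorm]
  exact ht.symm

open scoped MatrixOrder in
lemma psd_eq_conjTranspose_mul_self {A : Matrix (Fin n) (Fin n) ℝ} (hA : A.PosSemidef) :
    ∃ B : Matrix (Fin n) (Fin n) ℝ, A = Bᴴ * B := by
  obtain ⟨B, hB⟩ := CStarAlgebra.nonneg_iff_eq_star_mul_self.mp hA.nonneg
  exact ⟨B, by rw [hB, Matrix.star_eq_conjTranspose]⟩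

lemma cs_sum {ι : Type*} [Fintype ι] (f g : ι → ℝ) :
    |∑ i, f i * g i| ≤ Real.sqrt (∑ i, f i ^ 2) * Real.sqrt (∑ i, g i ^ 2) := by
  have h := Finset.sum_mul_sq_le_sq_mul_sq Finset.univ f g
  calc |∑ i, f i * g i| = Real.sqrt ((∑ i, f i * g i) ^ 2) := (Real.sqrt_sq_eq_abs _).symm
    _ ≤ Real.sqrt ((∑ i, f i ^ 2) * ∑ i, g i ^ 2) := Real.sqrt_le_sqrt h
    _ = _ := Real.sqrt_mul (by positivity) _

lemma l2_add_le {ι : Type*} [Fintype ι] (f g : ι → ℝ) :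
    Real.sqrt (∑ i, (f i + g i) ^ 2) ≤
      Real.sqrt (∑ i, f i ^ 2) + Real.sqrt (∑ i, g i ^ 2) := by
  set a := Real.sqrt (∑ i, f i ^ 2) with ha
  set b := Real.sqrt (∑ i, g i ^ 2) with hb
  have ha2 : a ^ 2 = ∑ i, f i ^ 2 := Real.sq_sqrt (by positivity)
  have hb2 : b ^ 2 = ∑ i, g i ^ 2 := Real.sq_sqrt (by positivity)
  have hcs : ∑ i, f i * g i ≤ a * b := le_trans (le_abs_self _) (cs_sum f g)
  have key : ∑ i, (f i + g i) ^ 2 ≤ (a + b) ^ 2 := by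
    have : ∑ i, (f i + g i) ^ 2 = (∑ i, f i ^ 2) + 2 * (∑ i, f i * g i) + ∑ i, g i ^ 2 := by
      simp only [Finset.mul_sum, ← Finset.sum_add_distrib]
      congr 1; ext i; ring
    rw [this]; nlinarith
  calc Real.sqrt (∑ i, (f i + g i) ^ 2) ≤ Real.sqrt ((a + b) ^ 2) := Real.sqrt_le_sqrt key
    _ = a + b := Real.sqrt_sq (by positivity)

lemma frobNorm_eq (M : Matrix (Fin n) (Fin n) ℝ) :
    frobNorm M = Real.sqrt (∑ i, ∑ j, (M i j) ^ 2) := by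
  rw [frobNorm]
  congr 1
  rw [Matrix.trace]
  simp only [Matrix.diag_apply, Matrix.mul_apply, Matrix.transpose_apply]
  rw [Finset.sum_comm]
  congr 1; ext i; congr 1; ext j; ring

lemma frobNorm_le_nucNorm (M : Matrix (Fin n) (Fin n) ℝ) : frobNorm M ≤ nucNorm M := by
  have hP : (Mᵀ * M).PosSemidef := by simpa using Matrix.posSemidef_conjTranspose_mul_self M
  have hT : (Mᵀ * M).IsHermitian := hP.1
  have h1 : Matrix.trace (Mᵀ * M) = ∑ i, hT.eigenvalues i := by
    exact trace_eq_sum_eig _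
  have he : ∀ i, 0 ≤ hT.eigenvalues i :=
    hP.eigenvalues_nonneg
  rw [frobNorm, h1]
  have h2 : ∑ i, hT.eigenvalues i
      = ∑ i, (Real.sqrt (hT.eigenvalues i)) ^ 2 := by
    congr 1; ext i; rw [Real.sq_sqrt (he i)]
  rw [h2]
  calc Real.sqrt (∑ i, (Real.sqrt (hT.eigenvalues i)) ^ 2)
      ≤ Real.sqrt ((∑ i, Real.sqrt (hT.eigenvalues i)) ^ 2) := by
        apply Real.sqrt_le_sqrt
        exact Finset.sum_sq_le_sq_sum_of_nonneg (fun i _ => Real.sqrt_nonneg _)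
    _ = nucNorm M := by
        rw [Real.sqrt_sq (by positivity)]; rfl

lemma mulVec_le_opNorm (M : Matrix (Fin n) (Fin n) ℝ) (x : Fin n → ℝ) (hx : ∑ i, x i ^ 2 = 1) :
    Real.sqrt (∑ i, (M *ᵥ x) i ^ 2) ≤ opNorm M := by
  have hx' : ‖(WithLp.equiv 2 (Fin n → ℝ)).symm x‖ = 1 := by
    rw [EuclideanSpace.norm_eq]
    simp only [WithLp.equiv_symm_apply, PiLp.toLp_apply]
    simp only [Real.norm_eq_abs, sq_abs]
    rw [hx, Real.sqrt_one]
  have h := (LinearMap.toContinuousLinearMap (Matrix.toEuclideanLin M)).le_opNorm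
    ((WithLp.equiv 2 (Fin n → ℝ)).symm x)
  rw [hx', mul_one] at h
  refine le_trans (le_of_eq ?_) h
  rw [show (LinearMap.toContinuousLinearMap (Matrix.toEuclideanLin M))
      ((WithLp.equiv 2 (Fin n → ℝ)).symm x) = (Matrix.toEuclideanLin M) ((WithLp.equiv 2 (Fin n → ℝ)).symm x) from rfl]
  rw [Matrix.toEuclideanLin_apply]
  rw [EuclideanSpace.norm_eq]
  simp [sq_abs]

/-- trace pairing -/
noncomputable def Sp (A B : Matrix (Fin n) (Fin n) ℝ) : ℝ := Matrix.trace (Aᵀ * B)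

lemma Sp_apply (A B : Matrix (Fin n) (Fin n) ℝ) : Sp A B = ∑ i, ∑ j, A i j * B i j := by
  rw [Sp, Matrix.trace]
  simp only [Matrix.diag_apply, Matrix.mul_apply, Matrix.transpose_apply]
  rw [Finset.sum_comm]

lemma Sp_conj (Q A B : Matrix (Fin n) (Fin n) ℝ) (hQ : Qᵀ = Q) :
    Sp (Q * A * Q) B = Sp A (Q * B * Q) := by
  rw [Sp, Sp, show (Q * A * Q)ᵀ * B = Q * (Aᵀ * (Q * B)) by
    rw [Matrix.transpose_mul, Matrix.transpose_mul, hQ]; simp only [Matrix.mul_assoc],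
    Matrix.trace_mul_comm, show Aᵀ * (Q * B) * Q = Aᵀ * (Q * B * Q) by
      simp only [Matrix.mul_assoc]]

lemma Sp_sub_right (A B C : Matrix (Fin n) (Fin n) ℝ) : Sp A (B - C) = Sp A B - Sp A C := by
  rw [Sp, Sp, Sp, Matrix.mul_sub, Matrix.trace_sub]

lemma Sp_sub_left (A B C : Matrix (Fin n) (Fin n) ℝ) : Sp (A - B) C = Sp A C - Sp B C := by
  rw [Sp, Sp, Sp, Matrix.transpose_sub, Matrix.sub_mul, Matrix.trace_sub]

lemma Sp_smul_sum (lam : Fin m → ℝ) (M : Fin m → Matrix (Fin n) (Fin n) ℝ)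
    (B : Matrix (Fin n) (Fin n) ℝ) :
    Sp (∑ i, lam i • M i) B = ∑ i, lam i * Sp (M i) B := by
  simp only [Sp, Matrix.transpose_sum, Matrix.transpose_smul, Matrix.sum_mul, Matrix.smul_mul,
    Matrix.trace_sum, Matrix.trace_smul, smul_eq_mul]

lemma Sp_vecMulVec (z : Fin n → ℝ) (H : Matrix (Fin n) (Fin n) ℝ) :
    Sp (vecMulVec z z) H = z ⬝ᵥ H *ᵥ z := by
  rw [Sp_apply]
  simp only [Matrix.vecMulVec_apply, dotProduct, Matrix.mulVec, Finset.mul_sum]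
  exact Finset.sum_congr rfl fun j _ => Finset.sum_congr rfl fun k _ => by ring

lemma trace_NtN (N : Matrix (Fin n) (Fin n) ℝ) :
    Matrix.trace (Nᵀ * N) = ∑ j, ∑ k, (N j k) ^ 2 := by
  rw [Matrix.trace]
  simp only [Matrix.diag_apply, Matrix.mul_apply, Matrix.transpose_apply]
  rw [Finset.sum_comm]
  exact Finset.sum_congr rfl fun j _ => Finset.sum_congr rfl fun k _ => by ring

lemma Sp_NtN (Y N : Matrix (Fin n) (Fin n) ℝ) :
    Sp Y (Nᵀ * N) = ∑ j, (fun k => N j k) ⬝ᵥ Y *ᵥ (fun k => N j k) := by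
  rw [Sp_apply]
  simp only [Matrix.mul_apply, Matrix.transpose_apply, dotProduct, Matrix.mulVec,
    Finset.mul_sum, Finset.sum_mul]
  rw [show (∑ k, ∑ l, ∑ j, Y k l * (N j k * N j l))
      = ∑ k, ∑ j, ∑ l, Y k l * (N j k * N j l) from
    Finset.sum_congr rfl fun k _ => Finset.sum_comm]
  rw [Finset.sum_comm]
  exact Finset.sum_congr rfl fun j _ => Finset.sum_congr rfl fun k _ =>
    Finset.sum_congr rfl fun l _ => by ring

lemma Sp_cs (A B : Matrix (Fin n) (Fin n) ℝ) : |Sp A B| ≤ frobNorm A * frobNorm B := by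
  rw [Sp_apply, frobNorm_eq, frobNorm_eq]
  have h := cs_sum (ι := Fin n × Fin n) (fun p => A p.1 p.2) (fun p => B p.1 p.2)
  rwa [Fintype.sum_prod_type, Fintype.sum_prod_type, Fintype.sum_prod_type] at h

lemma hPP (x0 : Fin n → ℝ) (hx0 : ∑ i, x0 i ^ 2 = 1) :
    vecMulVec x0 x0 * vecMulVec x0 x0 = vecMulVec x0 x0 := by
  ext i j
  simp only [Matrix.mul_apply, Matrix.vecMulVec_apply]
  have : ∀ k, x0 i * x0 k * (x0 k * x0 j) = (x0 i * x0 j) * x0 k ^ 2 := fun k => by ring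
  rw [Finset.sum_congr rfl fun k _ => this k, ← Finset.mul_sum, hx0, mul_one]

lemma hQQ (x0 : Fin n → ℝ) (hx0 : ∑ i, x0 i ^ 2 = 1) :
    (1 - vecMulVec x0 x0) * (1 - vecMulVec x0 x0) = (1 - vecMulVec x0 x0) := by
  rw [Matrix.sub_mul, Matrix.mul_sub, Matrix.mul_sub, hPP x0 hx0]
  simp only [Matrix.one_mul, Matrix.mul_one]
  abel

lemma Q_TProj_Q (x0 : Fin n → ℝ) (hx0 : ∑ i, x0 i ^ 2 = 1) (H : Matrix (Fin n) (Fin n) ℝ) :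
    (1 - vecMulVec x0 x0) * (TProj x0 H) * (1 - vecMulVec x0 x0) = 0 := by
  have h : (1 - vecMulVec x0 x0) * (1 - vecMulVec x0 x0) = (1 - vecMulVec x0 x0) := hQQ x0 hx0
  rw [TProj, TperpProj]
  rw [show (1 - vecMulVec x0 x0) * (H - (1 - vecMulVec x0 x0) * H * (1 - vecMulVec x0 x0)) *
        (1 - vecMulVec x0 x0)
      = (1 - vecMulVec x0 x0) * H * (1 - vecMulVec x0 x0)
        - ((1 - vecMulVec x0 x0) * (1 - vecMulVec x0 x0)) * H *
          ((1 - vecMulVec x0 x0) * (1 - vecMulVec x0 x0)) by noncomm_ring, h]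
  exact sub_self _

lemma TProj_expand (x0 : Fin n → ℝ) (H : Matrix (Fin n) (Fin n) ℝ) :
    TProj x0 H = vecMulVec x0 x0 * H + H * vecMulVec x0 x0
      - vecMulVec x0 x0 * H * vecMulVec x0 x0 := by
  rw [TProj, TperpProj]; noncomm_ring

lemma TProj_eq (x0 : Fin n → ℝ) (hx0 : ∑ i, x0 i ^ 2 = 1) (H : Matrix (Fin n) (Fin n) ℝ)
    (hH : Hᵀ = H) :
    TProj x0 H = vecMulVec x0 (H *ᵥ x0 - ((x0 ⬝ᵥ H *ᵥ x0) / 2) • x0)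
      + vecMulVec (H *ᵥ x0 - ((x0 ⬝ᵥ H *ᵥ x0) / 2) • x0) x0 := by
  have hsym : ∀ k j, H k j = H j k := fun k j => by
    conv_rhs => rw [← hH]
    exact (Matrix.transpose_apply H j k).symm
  have hPH : vecMulVec x0 x0 * H = vecMulVec x0 (H *ᵥ x0) := by
    ext i j
    simp only [Matrix.mul_apply, Matrix.vecMulVec_apply, Matrix.mulVec, dotProduct]
    rw [Finset.mul_sum]
    exact Finset.sum_congr rfl fun k _ => by rw [hsym k j]; ring
  have hHP : H * vecMulVec x0 x0 = vecMulVec (H *ᵥ x0) x0 := by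
    ext i j
    simp only [Matrix.mul_apply, Matrix.vecMulVec_apply, Matrix.mulVec, dotProduct]
    rw [Finset.sum_mul]
    exact Finset.sum_congr rfl fun k _ => by ring
  have hPHP : vecMulVec x0 x0 * H * vecMulVec x0 x0
      = (x0 ⬝ᵥ H *ᵥ x0) • vecMulVec x0 x0 := by
    rw [hPH]
    ext i j
    simp only [Matrix.mul_apply, Matrix.vecMulVec_apply, Matrix.smul_apply,
      dotProduct, smul_eq_mul, Finset.sum_mul]
    exact Finset.sum_congr rfl fun k _ => by ring
  rw [TProj_expand, hPHP, hPH, hHP]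
  ext i j
  simp only [Matrix.add_apply, Matrix.sub_apply, Matrix.vecMulVec_apply, Matrix.smul_apply,
    Pi.sub_apply, Pi.smul_apply, smul_eq_mul]
  ring

end Helpers

lemma rank2_sum_sq (x0 y : Fin n → ℝ) (hx0 : ∑ i, x0 i ^ 2 = 1) :
    ∑ i, ∑ j, ((vecMulVec x0 y + vecMulVec y x0) i j) ^ 2
      ≤ 2 * ∑ i, (((vecMulVec x0 y + vecMulVec y x0)) *ᵥ x0) i ^ 2 := by
  set S := ∑ j, y j ^ 2 with hS
  set c := ∑ j, y j * x0 j with hc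
  have hL : ∑ i, ∑ j, ((vecMulVec x0 y + vecMulVec y x0) i j) ^ 2 = 2 * S + 2 * c ^ 2 := by
    have inner : ∀ i, ∑ j, ((vecMulVec x0 y + vecMulVec y x0) i j) ^ 2
        = x0 i ^ 2 * S + (2 * c) * (y i * x0 i) + y i ^ 2 * 1 := by
      intro i
      have e1 : ∀ j, ((vecMulVec x0 y + vecMulVec y x0) i j) ^ 2
          = x0 i ^ 2 * y j ^ 2 + (2 * (y i * x0 i)) * (y j * x0 j) + y i ^ 2 * x0 j ^ 2 := by
        intro j
        simp only [Matrix.add_apply, Matrix.vecMulVec_apply]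
        ring
      rw [Finset.sum_congr rfl fun j _ => e1 j, Finset.sum_add_distrib, Finset.sum_add_distrib,
        ← Finset.mul_sum, ← Finset.mul_sum, ← Finset.mul_sum, hx0, ← hS, ← hc]
      ring
    rw [Finset.sum_congr rfl fun i _ => inner i, Finset.sum_add_distrib, Finset.sum_add_distrib]
    have t1 : ∑ i, x0 i ^ 2 * S = S := by rw [← Finset.sum_mul, hx0, one_mul]
    have t2 : ∑ i, (2 * c) * (y i * x0 i) = 2 * c * c := by rw [← Finset.mul_sum, ← hc]
    have t3 : ∑ i, y i ^ 2 * 1 = S := by simp [← hS]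
    rw [t1, t2, t3]; ring
  have hv : ∀ i, ((vecMulVec x0 y + vecMulVec y x0) *ᵥ x0) i = c * x0 i + y i := by
    intro i
    simp only [Matrix.mulVec, dotProduct, Matrix.add_apply, Matrix.vecMulVec_apply]
    have e1 : ∀ j, (x0 i * y j + y i * x0 j) * x0 j
        = x0 i * (y j * x0 j) + y i * x0 j ^ 2 := fun j => by ring
    rw [Finset.sum_congr rfl fun j _ => e1 j, Finset.sum_add_distrib, ← Finset.mul_sum,
      ← Finset.mul_sum, hx0, ← hc]
    ring
  have hR : ∑ i, (((vecMulVec x0 y + vecMulVec y x0)) *ᵥ x0) i ^ 2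
      = c ^ 2 * 1 + (2 * c) * c + S := by
    have e1 : ∀ i, (((vecMulVec x0 y + vecMulVec y x0)) *ᵥ x0) i ^ 2
        = c ^ 2 * x0 i ^ 2 + (2 * c) * (y i * x0 i) + y i ^ 2 := by
      intro i; rw [hv i]; ring
    rw [Finset.sum_congr rfl fun i _ => e1 i, Finset.sum_add_distrib, Finset.sum_add_distrib,
      ← Finset.mul_sum, ← Finset.mul_sum, hx0, ← hc, ← hS]
  rw [hL, hR]
  nlinarith [sq_nonneg c]

lemma frobNorm_nonneg {n : ℕ} (M : Matrix (Fin n) (Fin n) ℝ) : 0 ≤ frobNorm M :=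
  Real.sqrt_nonneg _

lemma frob_le_sqrt2_op {n : ℕ} (x0 y : Fin n → ℝ) (hx0 : ∑ i, x0 i ^ 2 = 1) :
    frobNorm (vecMulVec x0 y + vecMulVec y x0)
      ≤ Real.sqrt 2 * opNorm (vecMulVec x0 y + vecMulVec y x0) := by
  rw [frobNorm_eq]
  have h1 := rank2_sum_sq x0 y hx0
  have h2 := mulVec_le_opNorm (vecMulVec x0 y + vecMulVec y x0) x0 hx0
  calc Real.sqrt (∑ i, ∑ j, ((vecMulVec x0 y + vecMulVec y x0) i j) ^ 2)
      ≤ Real.sqrt (2 * ∑ i, (((vecMulVec x0 y + vecMulVec y x0)) *ᵥ x0) i ^ 2) :=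
        Real.sqrt_le_sqrt h1
    _ = Real.sqrt 2 * Real.sqrt (∑ i, (((vecMulVec x0 y + vecMulVec y x0)) *ᵥ x0) i ^ 2) :=
        Real.sqrt_mul (by norm_num) _
    _ ≤ Real.sqrt 2 * opNorm (vecMulVec x0 y + vecMulVec y x0) :=
        mul_le_mul_of_nonneg_left h2 (Real.sqrt_nonneg 2)

set_option maxHeartbeats 1000000 in
/-- Stability -/
theorem noisy_recovery_stability (δ : ℝ) (hδ0 : 0 ≤ δ) (hδ : δ ≤ 1 / 9) :
    ∃ C : ℝ, 0 < C ∧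
      ∀ (n m : ℕ) (z : Fin m → Fin n → ℝ) (x0 : Fin n → ℝ) (lam : Fin m → ℝ) (ε : ℝ)
        (X : Matrix (Fin n) (Fin n) ℝ),
        (∑ i, (x0 i) ^ 2 = 1) →
        (∀ W : Matrix (Fin n) (Fin n) ℝ, W.PosSemidef →
          (1 / (m : ℝ)) * ∑ i, |z i ⬝ᵥ W.mulVec (z i)| ≤ (1 + δ) * nucNorm W) →
        (∀ y : Fin n → ℝ,
          0.94 * (1 - δ) * opNorm (vecMulVec x0 y + vecMulVec y x0) ≤
            (1 / (m : ℝ)) * ∑ i, |z i ⬝ᵥ (vecMulVec x0 y + vecMulVec y x0).mulVec (z i)|) →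
        nucNorm (TProj x0 (∑ i, lam i • vecMulVec (z i) (z i))) ≤ 1 / 2 →
        (∀ u : Fin n → ℝ, u ⬝ᵥ x0 = 0 →
          ∑ j, (u j) ^ 2 ≤ u ⬝ᵥ (∑ i, lam i • vecMulVec (z i) (z i)).mulVec u) →
        (∑ i, |lam i| ≤ 5) →
        X.PosSemidef →
        Real.sqrt (∑ i,
            (z i ⬝ᵥ X.mulVec (z i) - z i ⬝ᵥ (vecMulVec x0 x0).mulVec (z i)) ^ 2) ≤ ε →
        frobNorm (X - vecMulVec x0 x0) ≤ C * ε := by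
  refine ⟨300, by norm_num, ?_⟩
  intro n m z x0 lam ε X hx0 h2 h3 h4 h5 hlam hX hfeas
  have hε : 0 ≤ ε := le_trans (Real.sqrt_nonneg _) hfeas
  set Y := ∑ i, lam i • vecMulVec (z i) (z i) with hYdef
  set H : Matrix (Fin n) (Fin n) ℝ := X - vecMulVec x0 x0 with hHdef
  set Hp := TperpProj x0 X with hHpdef
  -- basic symmetry facts
  have hXsym : Xᵀ = X := by
    have h : Xᴴ = X := hX.1
    rwa [Matrix.conjTranspose_eq_transpose_of_trivial] at h
  have hPsym : (vecMulVec x0 x0)ᵀ = vecMulVec x0 x0 := by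
    ext i j; simp [Matrix.transpose_apply, Matrix.vecMulVec_apply, mul_comm]
  have hHsym : Hᵀ = H := by rw [hHdef, Matrix.transpose_sub, hXsym, hPsym]
  have hQsym : (1 - vecMulVec x0 x0)ᵀ = 1 - vecMulVec x0 x0 := by
    rw [Matrix.transpose_sub, Matrix.transpose_one, hPsym]
  have hPx : vecMulVec x0 x0 *ᵥ x0 = x0 := by
    ext i
    simp only [Matrix.mulVec, dotProduct, Matrix.vecMulVec_apply]
    have : ∀ j, x0 i * x0 j * x0 j = x0 i * x0 j ^ 2 := fun j => by ring
    rw [Finset.sum_congr rfl fun j _ => this j, ← Finset.mul_sum, hx0, mul_one]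
  -- feasibility in terms of H
  have hfeas' : Real.sqrt (∑ i, (z i ⬝ᵥ H *ᵥ z i) ^ 2) ≤ ε := by
    refine le_trans (le_of_eq ?_) hfeas
    congr 1
    refine Finset.sum_congr rfl fun i _ => ?_
    rw [hHdef, Matrix.sub_mulVec, dotProduct_sub]
  have habs : ∀ i, |z i ⬝ᵥ H *ᵥ z i| ≤ ε := by
    intro i
    have h1 : (z i ⬝ᵥ H *ᵥ z i) ^ 2 ≤ ∑ k, (z k ⬝ᵥ H *ᵥ z k) ^ 2 :=
      Finset.single_le_sum (f := fun k => (z k ⬝ᵥ H *ᵥ z k) ^ 2)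
        (fun k _ => sq_nonneg _) (Finset.mem_univ i)
    calc |z i ⬝ᵥ H *ᵥ z i| = Real.sqrt ((z i ⬝ᵥ H *ᵥ z i) ^ 2) := (Real.sqrt_sq_eq_abs _).symm
      _ ≤ Real.sqrt (∑ k, (z k ⬝ᵥ H *ᵥ z k) ^ 2) := Real.sqrt_le_sqrt h1
      _ ≤ ε := hfeas'
  -- m ≥ 1
  have hm1 : (1 : ℝ) ≤ (m : ℝ) := by
    rcases Nat.eq_zero_or_pos m with hm | hm
    · exfalso
      subst hm
      have h3' := h3 x0
      rw [show (1 / ((0:ℕ) : ℝ)) *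
            ∑ i : Fin 0, |z i ⬝ᵥ (vecMulVec x0 x0 + vecMulVec x0 x0).mulVec (z i)| = 0 by simp]
        at h3'
      have hop := mulVec_le_opNorm (vecMulVec x0 x0 + vecMulVec x0 x0) x0 hx0
      have hsum4 : ∑ i, ((vecMulVec x0 x0 + vecMulVec x0 x0) *ᵥ x0) i ^ 2 = 4 := by
        rw [show (vecMulVec x0 x0 + vecMulVec x0 x0) *ᵥ x0 = x0 + x0 by
          rw [Matrix.add_mulVec, hPx]]
        have : ∀ i, ((x0 + x0) i) ^ 2 = 4 * x0 i ^ 2 := fun i => by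
          simp only [Pi.add_apply]; ring
        rw [Finset.sum_congr rfl fun i _ => this i, ← Finset.mul_sum, hx0, mul_one]
      rw [hsum4, show Real.sqrt 4 = 2 by
        rw [show (4:ℝ) = 2 ^ 2 by norm_num, Real.sqrt_sq (by norm_num)]] at hop
      nlinarith [hop, h3']
    · exact_mod_cast hm
  have hm0 : (0 : ℝ) < (m : ℝ) := by linarith
  have hsm : Real.sqrt (m : ℝ) * Real.sqrt (m : ℝ) = (m : ℝ) := Real.mul_self_sqrt (le_of_lt hm0)
  have hsm1 : 1 ≤ Real.sqrt (m : ℝ) := by nlinarith [Real.sqrt_nonneg (m : ℝ)]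
  -- ℓ1 bound on residuals
  have hl1 : (1 / (m : ℝ)) * ∑ i, |z i ⬝ᵥ H *ᵥ z i| ≤ ε := by
    have hcs := cs_sum (fun i : Fin m => |z i ⬝ᵥ H *ᵥ z i|) (fun _ => (1 : ℝ))
    simp only [mul_one, one_pow, sq_abs] at hcs
    have hsum_nonneg : (0:ℝ) ≤ ∑ i, |z i ⬝ᵥ H *ᵥ z i| :=
      Finset.sum_nonneg fun i _ => abs_nonneg _
    rw [abs_of_nonneg hsum_nonneg] at hcs
    have hcard : ∑ _i : Fin m, (1:ℝ) = (m : ℝ) := by simp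
    rw [hcard] at hcs
    have hsle : Real.sqrt (∑ k, (z k ⬝ᵥ H *ᵥ z k) ^ 2) ≤ ε := hfeas'
    have hstep : ∑ i, |z i ⬝ᵥ H *ᵥ z i| ≤ ε * Real.sqrt (m:ℝ) := by
      calc ∑ i, |z i ⬝ᵥ H *ᵥ z i|
          ≤ Real.sqrt (∑ k, (z k ⬝ᵥ H *ᵥ z k) ^ 2) * Real.sqrt (m:ℝ) := hcs
        _ ≤ ε * Real.sqrt (m:ℝ) := by
            apply mul_le_mul_of_nonneg_right hsle (Real.sqrt_nonneg _)
    rw [one_div, inv_mul_le_iff₀ hm0]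
    calc ∑ i, |z i ⬝ᵥ H *ᵥ z i| ≤ ε * Real.sqrt (m:ℝ) := hstep
      _ ≤ ε * (m : ℝ) := by nlinarith [Real.sqrt_nonneg (m:ℝ)]
      _ = (m : ℝ) * ε := mul_comm _ _
  -- Hp facts
  have hQP : (1 - vecMulVec x0 x0) * vecMulVec x0 x0 = 0 := by
    rw [Matrix.sub_mul, Matrix.one_mul, hPP x0 hx0]; exact sub_self _
  have hHpH : TperpProj x0 H = Hp := by
    rw [hHpdef, TperpProj, TperpProj, hHdef]
    rw [show (1 - vecMulVec x0 x0) * (X - vecMulVec x0 x0) * (1 - vecMulVec x0 x0)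
        = (1 - vecMulVec x0 x0) * X * (1 - vecMulVec x0 x0)
          - ((1 - vecMulVec x0 x0) * vecMulVec x0 x0) * (1 - vecMulVec x0 x0) by noncomm_ring,
      hQP, Matrix.zero_mul, sub_zero]
  have hHp_psd : Hp.PosSemidef := by
    have h := hX.conjTranspose_mul_mul_same (B := (1 - vecMulVec x0 x0))
    rw [show (1 - vecMulVec x0 x0)ᴴ = (1 - vecMulVec x0 x0) by
      rw [Matrix.conjTranspose_eq_transpose_of_trivial, hQsym]] at h
    exact h
  have hHp_nn : ∀ v : Fin n → ℝ, 0 ≤ v ⬝ᵥ Hp *ᵥ v := fun v => by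
    simpa using hHp_psd.dotProduct_mulVec_nonneg v
  -- decomposition facts
  have hHsplit : TProj x0 H = H - Hp := by rw [TProj, hHpH]
  have hsplit : ∀ i, z i ⬝ᵥ (TProj x0 H) *ᵥ z i
      = z i ⬝ᵥ H *ᵥ z i - z i ⬝ᵥ Hp *ᵥ z i := by
    intro i
    rw [hHsplit, Matrix.sub_mulVec, dotProduct_sub]
  -- HT structured form
  have hHT : TProj x0 H = vecMulVec x0 (H *ᵥ x0 - ((x0 ⬝ᵥ H *ᵥ x0) / 2) • x0)
      + vecMulVec (H *ᵥ x0 - ((x0 ⬝ᵥ H *ᵥ x0) / 2) • x0) x0 :=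
    TProj_eq x0 hx0 H hHsym
  -- lower bound (restricted isometry on T)
  have hlow : 0.94 * (1 - δ) * opNorm (TProj x0 H)
      ≤ (1 / (m : ℝ)) * ∑ i, |z i ⬝ᵥ (TProj x0 H) *ᵥ z i| := by
    have h := h3 (H *ᵥ x0 - ((x0 ⬝ᵥ H *ᵥ x0) / 2) • x0)
    rwa [← hHT] at h
  -- upper bound
  have hup : (1 / (m : ℝ)) * ∑ i, |z i ⬝ᵥ (TProj x0 H) *ᵥ z i|
      ≤ ε + (1 + δ) * Matrix.trace Hp := by
    have hterm : ∀ i, |z i ⬝ᵥ (TProj x0 H) *ᵥ z i|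
        ≤ |z i ⬝ᵥ H *ᵥ z i| + z i ⬝ᵥ Hp *ᵥ z i := by
      intro i
      rw [hsplit i, sub_eq_add_neg]
      calc |z i ⬝ᵥ H *ᵥ z i + -(z i ⬝ᵥ Hp *ᵥ z i)|
          ≤ |z i ⬝ᵥ H *ᵥ z i| + |-(z i ⬝ᵥ Hp *ᵥ z i)| := abs_add_le _ _
        _ = |z i ⬝ᵥ H *ᵥ z i| + z i ⬝ᵥ Hp *ᵥ z i := by
            rw [abs_neg, abs_of_nonneg (hHp_nn (z i))]
    have hsum : ∑ i, |z i ⬝ᵥ (TProj x0 H) *ᵥ z i|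
        ≤ (∑ i, |z i ⬝ᵥ H *ᵥ z i|) + ∑ i, z i ⬝ᵥ Hp *ᵥ z i := by
      rw [← Finset.sum_add_distrib]
      exact Finset.sum_le_sum fun i _ => hterm i
    have h2' := h2 Hp hHp_psd
    rw [nucNorm_psd_eq_trace hHp_psd] at h2'
    have habs2 : ∑ i, |z i ⬝ᵥ Hp *ᵥ z i| = ∑ i, z i ⬝ᵥ Hp *ᵥ z i :=
      Finset.sum_congr rfl fun i _ => abs_of_nonneg (hHp_nn (z i))
    rw [habs2] at h2'
    calc (1 / (m : ℝ)) * ∑ i, |z i ⬝ᵥ (TProj x0 H) *ᵥ z i|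
        ≤ (1 / (m : ℝ)) * ((∑ i, |z i ⬝ᵥ H *ᵥ z i|) + ∑ i, z i ⬝ᵥ Hp *ᵥ z i) := by
          apply mul_le_mul_of_nonneg_left hsum (by positivity)
      _ = (1 / (m : ℝ)) * (∑ i, |z i ⬝ᵥ H *ᵥ z i|)
          + (1 / (m : ℝ)) * (∑ i, z i ⬝ᵥ Hp *ᵥ z i) := by ring
      _ ≤ ε + (1 + δ) * Matrix.trace Hp := add_le_add hl1 h2'
  -- certificate: Sp Y H
  have hSpYH : Sp Y H = ∑ i, lam i * (z i ⬝ᵥ H *ᵥ z i) := by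
    rw [hYdef, Sp_smul_sum]
    exact Finset.sum_congr rfl fun i _ => by rw [Sp_vecMulVec]
  have hSpYH_le : |Sp Y H| ≤ 5 * ε := by
    rw [hSpYH]
    calc |∑ i, lam i * (z i ⬝ᵥ H *ᵥ z i)| ≤ ∑ i, |lam i * (z i ⬝ᵥ H *ᵥ z i)| :=
        Finset.abs_sum_le_sum_abs _ _
      _ = ∑ i, |lam i| * |z i ⬝ᵥ H *ᵥ z i| := by simp [abs_mul]
      _ ≤ ∑ i, |lam i| * ε := Finset.sum_le_sum fun i _ =>
          mul_le_mul_of_nonneg_left (habs i) (abs_nonneg _)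
      _ = (∑ i, |lam i|) * ε := (Finset.sum_mul _ _ _).symm
      _ ≤ 5 * ε := mul_le_mul_of_nonneg_right hlam hε
  -- certificate: trace Hp ≤ Sp Y Hp
  have htrHp_le : Matrix.trace Hp ≤ Sp Y Hp := by
    obtain ⟨B, hB⟩ := psd_eq_conjTranspose_mul_self hX
    have hBt : X = Bᵀ * B := by
      rw [hB, Matrix.conjTranspose_eq_transpose_of_trivial]
    have hHpN : Hp = (B * (1 - vecMulVec x0 x0))ᵀ * (B * (1 - vecMulVec x0 x0)) := by
      rw [Matrix.transpose_mul, hQsym,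
        show (1 - vecMulVec x0 x0) * Bᵀ * (B * (1 - vecMulVec x0 x0))
          = (1 - vecMulVec x0 x0) * (Bᵀ * B) * (1 - vecMulVec x0 x0) by
            simp only [Matrix.mul_assoc], ← hBt]
      rw [hHpdef, TperpProj]
    have hNx0 : (B * (1 - vecMulVec x0 x0)) *ᵥ x0 = 0 := by
      rw [← Matrix.mulVec_mulVec,
        show (1 - vecMulVec x0 x0) *ᵥ x0 = 0 by
          rw [Matrix.sub_mulVec, Matrix.one_mulVec, hPx]; exact sub_self _,
        Matrix.mulVec_zero]
    have hrows : ∀ j, (fun k => (B * (1 - vecMulVec x0 x0)) j k) ⬝ᵥ x0 = 0 := by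
      intro j
      exact congrFun hNx0 j
    rw [show Matrix.trace Hp = ∑ j, ∑ k, ((B * (1 - vecMulVec x0 x0)) j k) ^ 2 by
      rw [hHpN, trace_NtN]]
    rw [show Sp Y Hp = ∑ j, (fun k => (B * (1 - vecMulVec x0 x0)) j k) ⬝ᵥ Y
        *ᵥ (fun k => (B * (1 - vecMulVec x0 x0)) j k) by rw [hHpN, Sp_NtN]]
    exact Finset.sum_le_sum fun j _ => h5 _ (hrows j)
  -- certificate: Sp Y Hp = Sp Y H - Sp Y HT
  have hSpYHp : Sp Y Hp = Sp Y H - Sp Y (TProj x0 H) := by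
    rw [show Hp = H - TProj x0 H by rw [hHsplit]; abel, Sp_sub_right]
  -- Sp Y HT = Sp YT HT
  have hSpYT : Sp Y (TProj x0 H) = Sp (TProj x0 Y) (TProj x0 H) := by
    have h0 : Sp ((1 - vecMulVec x0 x0) * Y * (1 - vecMulVec x0 x0)) (TProj x0 H) = 0 := by
      rw [Sp_conj _ _ _ hQsym, Q_TProj_Q x0 hx0]
      rw [Sp, Matrix.mul_zero, Matrix.trace_zero]
    conv_rhs => rw [TProj, TperpProj]
    rw [Sp_sub_left, h0, sub_zero]
  have hSpYT_le : |Sp (TProj x0 Y) (TProj x0 H)| ≤ (1 / 2) * frobNorm (TProj x0 H) := by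
    calc |Sp (TProj x0 Y) (TProj x0 H)|
        ≤ frobNorm (TProj x0 Y) * frobNorm (TProj x0 H) := Sp_cs _ _
      _ ≤ (1 / 2) * frobNorm (TProj x0 H) := by
          apply mul_le_mul_of_nonneg_right _ (frobNorm_nonneg _)
          exact le_trans (frobNorm_le_nucNorm _) h4
  -- frobenius vs operator norm on T
  have hfrobHT : frobNorm (TProj x0 H) ≤ Real.sqrt 2 * opNorm (TProj x0 H) := by
    rw [hHT]
    exact frob_le_sqrt2_op x0 _ hx0
  -- key bound on trace Hp
  have hkey2 : Matrix.trace Hp ≤ 5 * ε + (1 / 2) * frobNorm (TProj x0 H) := by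
    have h1 := htrHp_le
    rw [hSpYHp] at h1
    have h5e : Sp Y H ≤ 5 * ε := le_trans (le_abs_self _) hSpYH_le
    have hA : -Sp Y (TProj x0 H) ≤ (1 / 2) * frobNorm (TProj x0 H) := by
      rw [hSpYT]
      exact le_trans (neg_le_abs _) hSpYT_le
    linarith
  -- combine
  have ht0 : 0 ≤ opNorm (TProj x0 H) := norm_nonneg _
  have hs : Real.sqrt 2 * Real.sqrt 2 = 2 := Real.mul_self_sqrt (by norm_num)
  have hs0 : 0 ≤ Real.sqrt 2 := Real.sqrt_nonneg 2
  have hs14 : Real.sqrt 2 ≤ 1.41422 := by nlinarith [sq_nonneg (Real.sqrt 2 - 1.41422)]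
  have hfHT0 : 0 ≤ frobNorm (TProj x0 H) := frobNorm_nonneg _
  have htb : opNorm (TProj x0 H) ≤ 135 * ε := by
    nlinarith [hlow, hup, hkey2, hfrobHT, ht0, hε, hδ0, hδ, hs, hs0, hs14, hfHT0]
  -- final triangle inequality
  have hfrobHp : frobNorm Hp ≤ Matrix.trace Hp :=
    le_trans (frobNorm_le_nucNorm Hp) (le_of_eq (nucNorm_psd_eq_trace hHp_psd))
  have htri : frobNorm H ≤ frobNorm (TProj x0 H) + frobNorm Hp := by
    rw [frobNorm_eq H, frobNorm_eq (TProj x0 H), frobNorm_eq Hp]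
    have h := l2_add_le (ι := Fin n × Fin n)
      (fun p => (TProj x0 H) p.1 p.2) (fun p => Hp p.1 p.2)
    rw [Fintype.sum_prod_type, Fintype.sum_prod_type, Fintype.sum_prod_type] at h
    have hHeq : ∀ p : Fin n × Fin n, H p.1 p.2 = (TProj x0 H) p.1 p.2 + Hp p.1 p.2 := by
      intro p
      rw [hHsplit, Matrix.sub_apply]
      ring
    calc Real.sqrt (∑ i, ∑ j, (H i j) ^ 2)
        = Real.sqrt (∑ i, ∑ j, ((TProj x0 H) i j + Hp i j) ^ 2) := by
          congr 1
          exact Finset.sum_congr rfl fun i _ => Finset.sum_congr rfl fun j _ =>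
            by rw [hHeq (i, j)]
      _ ≤ _ := h
  have hfrobHT_le : frobNorm (TProj x0 H) ≤ Real.sqrt 2 * (135 * ε) := by
    calc frobNorm (TProj x0 H) ≤ Real.sqrt 2 * opNorm (TProj x0 H) := hfrobHT
      _ ≤ Real.sqrt 2 * (135 * ε) := mul_le_mul_of_nonneg_left htb hs0
  have hfrobHp_le : frobNorm Hp ≤ 5 * ε + (1 / 2) * (Real.sqrt 2 * (135 * ε)) := by
    calc frobNorm Hp ≤ Matrix.trace Hp := hfrobHp
      _ ≤ 5 * ε + (1 / 2) * frobNorm (TProj x0 H) := hkey2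
      _ ≤ 5 * ε + (1 / 2) * (Real.sqrt 2 * (135 * ε)) := by linarith [hfrobHT_le]
  calc frobNorm H ≤ frobNorm (TProj x0 H) + frobNorm Hp := htri
    _ ≤ Real.sqrt 2 * (135 * ε) + (5 * ε + (1 / 2) * (Real.sqrt 2 * (135 * ε))) := by
        linarith [hfrobHT_le, hfrobHp_le]
    _ ≤ 300 * ε := by nlinarith [hs14, hε, hs0]
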